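/- Let $0 \le k \le d$ be integers and let $S \subseteq \mathbb{R}^d$ be a set with $\mathcal{H}^{d-k}(S) = 0$. Let $F : \mathbb{R}^k \to \mathbb{R}^d$ be a $C^\infty$ map. Then for Lebesgue-almost every $v \in \mathbb{R}^d$, the translated map $F(\cdot) + v$ satisfies $F(x) + v \notin S$ for every $x$ in the closed unit ball $\mathbb{B}^k$ of $\mathbb{R}^k$. -/

import Mathlib

open MeasureTheory Metric Set ENNReal NNReal



lemma gp_net_lemma (k : ℕ) {r : ℝ} (hr : 0 < r) (hr1 : r ≤ 1) :
    ∃ P : Finset (EuclideanSpace ℝ (Fin k)),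
      (↑P ⊆ closedBall (0 : EuclideanSpace ℝ (Fin k)) 1) ∧
      (closedBall (0 : EuclideanSpace ℝ (Fin k)) 1 ⊆
        ⋃ y ∈ P, closedBall (y : EuclideanSpace ℝ (Fin k)) r) ∧
      (P.card : ℝ≥0∞) * ENNReal.ofReal ((r / 2) ^ k) ≤ ENNReal.ofReal ((2 : ℝ) ^ k) := by
  classical
  set E := EuclideanSpace ℝ (Fin k)
  set 𝒮 : Set (Set E) := {P | P ⊆ closedBall 0 1 ∧ P.Pairwise fun a b => r < dist a b} with h𝒮
  have hchain : ∀ c ⊆ 𝒮, IsChain (· ⊆ ·) c → c.Nonempty →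
      ∃ ub ∈ 𝒮, ∀ s ∈ c, s ⊆ ub := by
    intro c hc hchain _
    refine ⟨⋃₀ c, ⟨Set.sUnion_subset fun s hs => (hc hs).1, ?_⟩,
      fun s hs => Set.subset_sUnion_of_mem hs⟩
    rintro a ⟨s, hs, has⟩ b ⟨t, ht, hbt⟩ hab
    rcases hchain.total hs ht with h | h
    · exact (hc ht).2 (h has) hbt hab
    · exact (hc hs).2 has (h hbt) hab
  obtain ⟨M, -, hM⟩ := zorn_subset_nonempty 𝒮 hchain ∅ ⟨by simp, Set.pairwise_empty _⟩
  have hMB : M ⊆ closedBall 0 1 := hM.prop.1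
  have hMsep : M.Pairwise fun a b => r < dist a b := hM.prop.2
  have key : ∀ Q : Finset E, ↑Q ⊆ M →
      (Q.card : ℝ≥0∞) * volume (closedBall (0 : E) (r / 2)) ≤ volume (closedBall (0 : E) 2) := by
    intro Q hQ
    have hdisj : (↑Q : Set E).PairwiseDisjoint fun q => closedBall q (r / 2) := by
      intro a ha b hb hab
      exact closedBall_disjoint_closedBall (by linarith [hMsep (hQ ha) (hQ hb) hab])
    have hsub : ∀ q ∈ Q, closedBall q (r / 2) ⊆ closedBall (0 : E) 2 := by
      intro q hq x hx
      have hq1 : dist q 0 ≤ 1 := mem_closedBall.mp (hMB (hQ hq))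
      have hxq : dist x q ≤ r / 2 := mem_closedBall.mp hx
      have := dist_triangle x q 0
      exact mem_closedBall.mpr (by linarith)
    calc (Q.card : ℝ≥0∞) * volume (closedBall (0 : E) (r / 2))
        = ∑ q ∈ Q, volume (closedBall q (r / 2)) := by
          rw [Finset.sum_congr rfl fun q _ =>
            (Measure.addHaar_closedBall' volume q (by positivity)).trans
              (Measure.addHaar_closedBall' volume 0 (by positivity)).symm,
            Finset.sum_const, nsmul_eq_mul]
      _ = volume (⋃ q ∈ Q, closedBall q (r / 2)) :=
          (measure_biUnion_finset hdisj fun q _ => measurableSet_closedBall).symm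
      _ ≤ volume (closedBall (0 : E) 2) := measure_mono (Set.iUnion₂_subset hsub)
  have hvpos : (0 : ℝ≥0∞) < volume (closedBall (0 : E) (r / 2)) :=
    measure_closedBall_pos _ _ (by positivity)
  have hvtop : volume (closedBall (0 : E) 2) ≠ ⊤ := measure_closedBall_lt_top.ne
  have hMfin : M.Finite := by
    by_contra hinf
    replace hinf : M.Infinite := hinf
    obtain ⟨n, hn⟩ := ENNReal.exists_nat_gt
      (show volume (closedBall (0 : E) 2) / volume (closedBall (0 : E) (r / 2)) ≠ ⊤ from
        ENNReal.div_lt_top hvtop hvpos.ne' |>.ne)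
    obtain ⟨t, htM, htfin, htcard⟩ := hinf.exists_subset_ncard_eq n
    have h1 := key htfin.toFinset (by simpa using htM)
    rw [show htfin.toFinset.card = n from by
      rw [← Set.ncard_coe_finset]; simpa using htcard] at h1
    have h2 : volume (closedBall (0 : E) 2) < ↑n * volume (closedBall (0 : E) (r / 2)) := by
      rwa [ENNReal.div_lt_iff (Or.inl hvpos.ne') (Or.inl (measure_closedBall_lt_top.ne))] at hn
    exact absurd h1 (not_le.mpr h2)

  refine ⟨hMfin.toFinset, by simpa using hMB, ?_, ?_⟩
  · -- covering by maximality
    intro x hx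
    by_contra hxc
    simp only [Set.mem_iUnion, Set.Finite.mem_toFinset, mem_closedBall, not_exists] at hxc
    push_neg at hxc
    have hins : insert x M ∈ 𝒮 := by
      constructor
      · exact Set.insert_subset hx hMB
      · refine (haveI : Std.Symm (fun a b : E => r < dist a b) := ⟨fun a b hab => by rwa [dist_comm]⟩; Set.pairwise_insert_of_symm) |>.mpr
          ⟨hMsep, fun b hb hxb => ?_⟩
        exact hxc b hb
    have hxM : x ∈ M := hM.2 hins (Set.subset_insert x M) (Set.mem_insert x M)
    have := hxc x hxM
    rw [dist_self] at this
    linarith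
  · have h1 := key hMfin.toFinset (by simp)
    rw [Measure.addHaar_closedBall' volume _ (by positivity : (0:ℝ) ≤ r / 2),
      Measure.addHaar_closedBall' volume _ (by norm_num : (0:ℝ) ≤ 2),
      finrank_euclideanSpace_fin, ← mul_assoc] at h1
    exact (ENNReal.mul_le_mul_iff_left (measure_closedBall_pos _ _ one_pos).ne'
      measure_closedBall_lt_top.ne).mp h1


lemma gp_vol_image_zero {k d : ℕ} (hkd : k < d)
    (g : EuclideanSpace ℝ (Fin k) → EuclideanSpace ℝ (Fin d)) {K : ℝ≥0}
    (hg : LipschitzOnWith K g (closedBall 0 1)) (hc : Continuous g) :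
    volume (g '' closedBall 0 1) = 0 := by
  set A := g '' closedBall 0 1 with hA
  have hAc : IsCompact A := (isCompact_closedBall (0 : EuclideanSpace ℝ (Fin k)) 1).image hc
  -- Hausdorff measure of the ball in dimension d vanishes
  have hball : μH[(d : ℝ)] (closedBall (0 : EuclideanSpace ℝ (Fin k)) 1) = 0 := by
    have h1 : dimH (closedBall (0 : EuclideanSpace ℝ (Fin k)) 1) < ((d : ℝ≥0) : ℝ≥0∞) := by
      calc dimH (closedBall (0 : EuclideanSpace ℝ (Fin k)) 1)
          ≤ dimH (Set.univ : Set (EuclideanSpace ℝ (Fin k))) := dimH_mono (Set.subset_univ _)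
        _ = (Module.finrank ℝ (EuclideanSpace ℝ (Fin k)) : ℝ≥0∞) :=
            Real.dimH_univ_eq_finrank _
        _ = (k : ℝ≥0∞) := by rw [finrank_euclideanSpace_fin]
        _ < _ := by exact_mod_cast hkd
    have := hausdorffMeasure_of_dimH_lt h1
    simpa using this
  have hAH : μH[(d : ℝ)] A = 0 := by
    have := hg.hausdorffMeasure_image_le (d := (d : ℝ)) (by positivity)
    rw [hball, mul_zero] at this
    exact le_antisymm this zero_le
  -- transfer to volume via the measurable equiv with the pi space
  set e := (MeasurableEquiv.toLp 2 (Fin d → ℝ)).symm with he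
  have hL : LipschitzWith 1 ⇑e := by
    rw [he]
    exact PiLp.lipschitzWith_ofLp 2 _
  have hAm : MeasurableSet (⇑e '' A) := (hAc.image hL.continuous).measurableSet
  have hvol : volume A = volume (⇑e '' A) := by
    have := (EuclideanSpace.volume_preserving_symm_measurableEquiv_toLp (Fin d)).measure_preimage
      hAm.nullMeasurableSet
    rw [← he] at this
    rw [← this, Set.preimage_image_eq A e.injective]
  rw [hvol]
  have hpi : volume (⇑e '' A) = μH[(d : ℝ)] (⇑e '' A) := by
    rw [← MeasureTheory.hausdorffMeasure_pi_real (ι := Fin d)]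
    simp
  rw [hpi]
  have := hL.hausdorffMeasure_image_le (d := (d : ℝ)) (by positivity) A
  rw [hAH, mul_zero] at this
  exact le_antisymm this zero_le

theorem general_position_ae_translation (k d : ℕ) (hkd : k ≤ d)
    (S : Set (EuclideanSpace ℝ (Fin d))) (hS : μH[(d : ℝ) - (k : ℝ)] S = 0)
    (F : EuclideanSpace ℝ (Fin k) → EuclideanSpace ℝ (Fin d))
    (hF : ContDiff ℝ (⊤ : ℕ∞) F) :
    ∀ᵐ v ∂(volume : Measure (EuclideanSpace ℝ (Fin d))),
      ∀ x ∈ Metric.closedBall (0 : EuclideanSpace ℝ (Fin k)) 1, F x + v ∉ S := by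
  classical
  set B := Metric.closedBall (0 : EuclideanSpace ℝ (Fin k)) 1 with hB
  -- a Lipschitz constant for `F` on `B`
  obtain ⟨K, hK⟩ : ∃ K : ℝ≥0, LipschitzOnWith K F B := by
    obtain ⟨C, hC⟩ := (isCompact_closedBall (0 : EuclideanSpace ℝ (Fin k)) 1).exists_bound_of_continuousOn
      (Continuous.continuousOn (hF.continuous_fderiv (by simp)))
    refine ⟨C.toNNReal, (convex_closedBall _ _).lipschitzOnWith_of_nnnorm_fderiv_le
      (fun x _ => (hF.differentiable (by simp)).differentiableAt) (fun x hx => ?_)⟩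
    rw [← norm_toNNReal]
    exact Real.toNNReal_mono (hC x hx)
  set L : ℝ := (K : ℝ) with hL
  have hL0 : 0 ≤ L := K.coe_nonneg
  set u : ℝ≥0∞ := volume (closedBall (0 : EuclideanSpace ℝ (Fin d)) 1) with hu
  have hu0 : u ≠ 0 := (measure_closedBall_pos _ _ one_pos).ne'
  have hutop : u ≠ ⊤ := measure_closedBall_lt_top.ne
  set C : ℝ≥0∞ := ENNReal.ofReal (4 ^ k * (1 + L) ^ d) * u with hC
  have hC0 : C ≠ 0 := by
    refine mul_ne_zero ?_ hu0
    simp only [ne_eq, ENNReal.ofReal_eq_zero, not_le]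
    positivity
  have hCtop : C ≠ ⊤ := ENNReal.mul_ne_top ENNReal.ofReal_ne_top hutop
  -- the per-piece estimate
  have piece : ∀ t : Set (EuclideanSpace ℝ (Fin d)), EMetric.diam t ≤ 1 →
      volume {v | ∃ x ∈ B, F x + v ∈ t} ≤
        C * ⨆ _ : t.Nonempty, EMetric.diam t ^ ((d : ℝ) - (k : ℝ)) := by
    intro t ht
    rcases Set.eq_empty_or_nonempty t with rfl | hne
    · simp
    obtain ⟨p, hp⟩ := hne
    rw [iSup_pos ⟨p, hp⟩]
    -- the main estimate, for any admissible scale r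
    have est : ∀ r : ℝ, 0 < r → r ≤ 1 → EMetric.diam t ≤ ENNReal.ofReal r →
        volume {v | ∃ x ∈ B, F x + v ∈ t} ≤
          ENNReal.ofReal (4 ^ k * (1 + L) ^ d * r ^ (d - k)) * u := by
      intro r hr hr1 hdiam
      obtain ⟨P, hPB, hPcov, hPcard⟩ := gp_net_lemma k hr hr1
      have hsub : {v | ∃ x ∈ B, F x + v ∈ t} ⊆
          ⋃ y ∈ P, closedBall (p - F y) ((1 + L) * r) := by
        rintro v ⟨x, hx, hxv⟩
        obtain ⟨y, hy, hxy⟩ := Set.mem_iUnion₂.mp (hPcov hx)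
        refine Set.mem_iUnion₂.2 ⟨y, hy, ?_⟩
        have h1 : dist (F x + v) p ≤ r :=
          (edist_le_ofReal hr.le).mp ((EMetric.edist_le_diam_of_mem hxv hp).trans hdiam)
        have h2 : dist (F x) (F y) ≤ L * dist x y := hK.dist_le_mul x hx y (hPB hy)
        have h3 : dist x y ≤ r := mem_closedBall.mp hxy
        rw [mem_closedBall]
        calc dist v (p - F y) = ‖(F x + v - p) + (F y - F x)‖ := by
              rw [dist_eq_norm]; congr 1; abel
          _ ≤ ‖F x + v - p‖ + ‖F y - F x‖ := norm_add_le _ _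
          _ ≤ r + L * r := by
              rw [← dist_eq_norm (F x + v) p] at *
              rw [show ‖F y - F x‖ = dist (F x) (F y) by rw [dist_eq_norm, norm_sub_rev]]
              have : L * dist x y ≤ L * r := by nlinarith
              linarith
          _ = (1 + L) * r := by ring
      have hcard : (P.card : ℝ≥0∞) ≤ ENNReal.ofReal ((4 / r) ^ k) := by
        have h2k : ENNReal.ofReal ((2 : ℝ) ^ k) =
            ENNReal.ofReal ((4 / r) ^ k) * ENNReal.ofReal ((r / 2) ^ k) := by
          rw [← ENNReal.ofReal_mul (by positivity), ← mul_pow,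
            show (4 / r) * (r / 2) = 2 by field_simp; ring]
        have h0 : ENNReal.ofReal ((r / 2) ^ k) ≠ 0 :=
          (ENNReal.ofReal_pos.2 (by positivity)).ne'
        rw [← ENNReal.mul_le_mul_iff_left h0 ENNReal.ofReal_ne_top]
        exact hPcard.trans_eq h2k
      calc volume {v | ∃ x ∈ B, F x + v ∈ t}
          ≤ ∑ y ∈ P, volume (closedBall (p - F y) ((1 + L) * r)) :=
            (measure_mono hsub).trans (measure_biUnion_finset_le _ _)
        _ = (P.card : ℝ≥0∞) * (ENNReal.ofReal (((1 + L) * r) ^ d) * u) := by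
            rw [Finset.sum_congr rfl fun y _ => by
              rw [Measure.addHaar_closedBall' volume _ (by positivity : (0:ℝ) ≤ (1 + L) * r),
                finrank_euclideanSpace_fin], Finset.sum_const, nsmul_eq_mul]
        _ ≤ ENNReal.ofReal ((4 / r) ^ k) * (ENNReal.ofReal (((1 + L) * r) ^ d) * u) := by
            gcongr
        _ = ENNReal.ofReal (4 ^ k * (1 + L) ^ d * r ^ (d - k)) * u := by
            have hrne : r ≠ 0 := hr.ne'
            have hrk : r ^ d = r ^ (d - k) * r ^ k := by rw [← pow_add]; congr 1; omega
            have hid : (4 / r) ^ k * ((1 + L) * r) ^ d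
                = 4 ^ k * (1 + L) ^ d * r ^ (d - k) := by
              rw [mul_pow, hrk, div_pow]
              field_simp
            rw [← mul_assoc, ← ENNReal.ofReal_mul (by positivity), hid]
    rcases eq_or_lt_of_le hkd with rfl | hkd'
    · -- k = d : use r = 1
      have h1 := est 1 one_pos le_rfl (by simpa using ht)
      have he : ((k : ℝ) - (k : ℝ)) = 0 := by ring
      rw [he, ENNReal.rpow_zero, mul_one]
      simpa [hC] using h1
    · -- k < d
      rcases eq_or_ne (EMetric.diam t) 0 with hdz | hdz
      · -- t is a singleton
        have hsing : t.Subsingleton := EMetric.diam_eq_zero_iff.mp hdz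
        have hzero : volume {v | ∃ x ∈ B, F x + v ∈ t} = 0 := by
          refine measure_mono_null (fun v hv => ?_)
            (gp_vol_image_zero hkd' (fun x => p - F x) (K := K) ?_ ?_)
          · obtain ⟨x, hx, hxv⟩ := hv
            refine ⟨x, hx, ?_⟩
            show p - F x = v
            rw [← hsing hxv hp, add_sub_cancel_left]
          · intro a ha b hb
            simpa [edist_sub_left] using hK ha hb
          · exact continuous_const.sub hF.continuous
        rw [hzero, hdz]
        exact zero_le
      · set r : ℝ := (EMetric.diam t).toReal with hr
        have hdtop : EMetric.diam t ≠ ⊤ := (ht.trans_lt (by norm_num)).ne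
        have hr0 : 0 < r := ENNReal.toReal_pos hdz hdtop
        have hr1 : r ≤ 1 := by
          rw [hr, ← ENNReal.toReal_one]
          exact ENNReal.toReal_mono (by norm_num) ht
        have h1 := est r hr0 hr1 (by rw [hr, ENNReal.ofReal_toReal hdtop])
        refine h1.trans (le_of_eq ?_)
        have hdr : ENNReal.ofReal (r ^ (d - k))
            = EMetric.diam t ^ ((d : ℝ) - (k : ℝ)) := by
          rw [ENNReal.ofReal_pow hr0.le, hr, ENNReal.ofReal_toReal hdtop,
            show ((d : ℝ) - (k : ℝ)) = ((d - k : ℕ) : ℝ) by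
              push_cast [Nat.cast_sub hkd]; ring,
            ENNReal.rpow_natCast]
        rw [ENNReal.ofReal_mul (by positivity), hdr, hC]
        ring
  -- global estimate
  set bad := {v : EuclideanSpace ℝ (Fin d) | ∃ x ∈ B, F x + v ∈ S} with hbad
  have main : ∀ ε : ℝ≥0∞, 0 < ε → volume bad ≤ C * ε := by
    intro ε hε
    rw [MeasureTheory.Measure.hausdorffMeasure_apply] at hS
    have h1 : (⨅ (t : ℕ → Set (EuclideanSpace ℝ (Fin d))) (_ : S ⊆ ⋃ n, t n)
        (_ : ∀ n, EMetric.diam (t n) ≤ 1),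
        ∑' n, ⨆ _ : (t n).Nonempty, EMetric.diam (t n) ^ ((d : ℝ) - (k : ℝ))) = 0 := by
      refine le_antisymm ?_ zero_le
      rw [← hS]
      exact le_iSup₂ (f := fun (r : ℝ≥0∞) (_ : 0 < r) =>
        ⨅ (t : ℕ → Set (EuclideanSpace ℝ (Fin d))) (_ : S ⊆ ⋃ n, t n)
          (_ : ∀ n, EMetric.diam (t n) ≤ r),
          ∑' n, ⨆ _ : (t n).Nonempty, EMetric.diam (t n) ^ ((d : ℝ) - (k : ℝ))) 1 one_pos
    have h2 := h1 ▸ hε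
    obtain ⟨t, ht⟩ := iInf_lt_iff.mp h2
    obtain ⟨hcov, ht⟩ := iInf_lt_iff.mp ht
    obtain ⟨hdiam, hsum⟩ := iInf_lt_iff.mp ht
    have hsub : bad ⊆ ⋃ n, {v | ∃ x ∈ B, F x + v ∈ t n} := by
      rintro v ⟨x, hx, hxv⟩
      obtain ⟨n, hn⟩ := Set.mem_iUnion.mp (hcov hxv)
      exact Set.mem_iUnion.2 ⟨n, x, hx, hn⟩
    calc volume bad ≤ ∑' n, volume {v | ∃ x ∈ B, F x + v ∈ t n} :=
          (measure_mono hsub).trans (measure_iUnion_le _)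
      _ ≤ ∑' n, C * ⨆ _ : (t n).Nonempty, EMetric.diam (t n) ^ ((d : ℝ) - (k : ℝ)) :=
          ENNReal.tsum_le_tsum fun n => piece _ (hdiam n)
      _ = C * ∑' n, ⨆ _ : (t n).Nonempty, EMetric.diam (t n) ^ ((d : ℝ) - (k : ℝ)) :=
          ENNReal.tsum_mul_left
      _ ≤ C * ε := mul_le_mul_right hsum.le C
  have hzero : volume bad = 0 := by
    have htend : Filter.Tendsto (fun n : ℕ => C * (n : ℝ≥0∞)⁻¹) Filter.atTop (nhds 0) := by
      have h := ENNReal.Tendsto.const_mul (a := C)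
        ENNReal.tendsto_inv_nat_nhds_zero (Or.inr hCtop)
      simpa using h
    have hle : ∀ n : ℕ, volume bad ≤ C * (n : ℝ≥0∞)⁻¹ := fun n =>
      main _ (ENNReal.inv_pos.mpr (by simp))
    exact le_antisymm (ge_of_tendsto' htend hle) zero_le
  rw [ae_iff]
  refine measure_mono_null (fun v hv => ?_) hzero
  simp only [Set.mem_setOf_eq] at hv ⊢
  push_neg at hv
  obtain ⟨x, hx, hxS⟩ := hv
  exact ⟨x, hx, hxS⟩
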